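/- Let F₀ be a number field and (Fₙ)ₙ≥0 a 2-tower (so [F_{n+1}:F_n] = 2 for all n). The tower is not thin if and only if there exists n ≥ 2 such that F_n/F_{n-2} is Galois with Galois group the Klein four group. -/

import Mathlib

theorem pgroup_exists_strict_between {G : Type*} [Group G] [Finite G]
    (hG : IsPGroup 2 G) {H : Subgroup G} (h4 : 4 ≤ H.index) :
    ∃ U : Subgroup G, H < U ∧ U < ⊤ := by
  haveI : Fact (Nat.Prime 2) := ⟨Nat.prime_two⟩
  have hHne : H ≠ ⊤ := by
    intro h; rw [h, Subgroup.index_top] at h4; omega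
  haveI : Group.IsNilpotent G := hG.isNilpotent
  have hnc : NormalizerCondition G := normalizerCondition_of_isNilpotent
  have hlt : H < Subgroup.normalizer (H : Set G) := hnc H (lt_top_iff_ne_top.mpr hHne)
  by_cases hnorm : Subgroup.normalizer (H : Set G) = ⊤
  · -- H is normal
    haveI : H.Normal := Subgroup.normalizer_eq_top_iff.mp hnorm
    have hquot : IsPGroup 2 (G ⧸ H) := hG.to_quotient H
    have hcard : Nat.card (G ⧸ H) = H.index := rfl
    haveI : Fintype (G ⧸ H) := Fintype.ofFinite _
    have hc4 : 4 ≤ Fintype.card (G ⧸ H) := by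
      rw [← Nat.card_eq_fintype_card, hcard]; exact h4
    have hdvd : 2 ∣ Fintype.card (G ⧸ H) := by
      obtain ⟨n, hn⟩ := IsPGroup.iff_card.mp hquot
      rw [Nat.card_eq_fintype_card] at hn
      rcases n with _ | n
      · rw [hn] at hc4; norm_num at hc4
      · rw [hn]; exact dvd_pow_self 2 (Nat.succ_ne_zero n)
    obtain ⟨q, hq⟩ := exists_prime_orderOf_dvd_card 2 hdvd
    refine ⟨Subgroup.comap (QuotientGroup.mk' H) (Subgroup.zpowers q), ?_, ?_⟩
    · constructor
      · intro x hx
        have h1 : QuotientGroup.mk' H x = 1 := (QuotientGroup.eq_one_iff x).mpr hx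
        exact Subgroup.mem_comap.mpr (by rw [h1]; exact Subgroup.one_mem _)
      · intro hle
        obtain ⟨g, hg⟩ := QuotientGroup.mk'_surjective H q
        have hgU : g ∈ Subgroup.comap (QuotientGroup.mk' H) (Subgroup.zpowers q) := by
          simp only [Subgroup.mem_comap, hg]; exact Subgroup.mem_zpowers q
        have hgH := hle hgU
        have : q = 1 := by rw [← hg]; exact (QuotientGroup.eq_one_iff g).mpr hgH
        rw [this, orderOf_one] at hq; omega
    · rw [lt_top_iff_ne_top]
      intro htop
      have hidx : (Subgroup.comap (QuotientGroup.mk' H) (Subgroup.zpowers q)).index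
          = (Subgroup.zpowers q).index :=
        Subgroup.index_comap_of_surjective _ (QuotientGroup.mk'_surjective H)
      rw [htop, Subgroup.index_top] at hidx
      have hmul := Subgroup.index_mul_card (Subgroup.zpowers q)
      rw [Nat.card_zpowers, hq, ← hidx, Nat.card_eq_fintype_card] at hmul
      omega
  · exact ⟨Subgroup.normalizer (H : Set G), hlt, lt_top_iff_ne_top.mpr hnorm⟩

theorem klein_of_card_four {G : Type*} [Group G] [Fintype G]
    (hcard : Fintype.card G = 4) (hsq : ∀ g : G, g ^ 2 = 1) :
    Nonempty (G ≃* Multiplicative (ZMod 2 × ZMod 2)) := by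
  classical
  have hinv : ∀ g : G, g⁻¹ = g := fun g => by
    rw [← mul_eq_one_iff_inv_eq, ← pow_two]; exact hsq g
  have hcomm : ∀ a b : G, a * b = b * a := fun a b => by
    have h1 : (a * b)⁻¹ = a * b := hinv _
    rw [mul_inv_rev, hinv a, hinv b] at h1
    rw [← h1]
  have rearr : ∀ w x y z : G, w * x * (y * z) = w * y * (x * z) := by
    intro w x y z
    rw [mul_assoc, ← mul_assoc x y z, hcomm x y, mul_assoc, ← mul_assoc]
  obtain ⟨a, ha⟩ := Fintype.exists_ne_of_one_lt_card (by omega) (1 : G)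
  have hb : ∃ b : G, b ≠ 1 ∧ b ≠ a := by
    by_contra hcon
    push_neg at hcon
    have hsub : (Finset.univ : Finset G) ⊆ {1, a} := by
      intro x _
      rcases eq_or_ne x 1 with h | h
      · simp [h]
      · simp [hcon x h]
    have h4 := Finset.card_le_card hsub
    simp only [Finset.card_univ, hcard] at h4
    have h2 : ({1, a} : Finset G).card ≤ 2 :=
      le_trans (Finset.card_insert_le _ _) (by simp)
    omega
  obtain ⟨b, hb1, hba⟩ := hb
  have key : ∀ (g : G) (u v : ZMod 2), g ^ (u + v).val = g ^ u.val * g ^ v.val := by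
    intro g u v
    rw [ZMod.val_add, ← pow_add]
    exact (pow_eq_pow_mod (u.val + v.val) (hsq g)).symm
  let f : Multiplicative (ZMod 2 × ZMod 2) →* G :=
    { toFun := fun z => a ^ (z.toAdd.1.val) * b ^ (z.toAdd.2.val)
      map_one' := by simp
      map_mul' := by
        intro x y
        simp only [toAdd_mul, Prod.fst_add, Prod.snd_add, key]
        rw [rearr] }
  have hzmod : ∀ i : ZMod 2, i = 0 ∨ i = 1 := by decide
  have hval0 : (0 : ZMod 2).val = 0 := rfl
  have hval1 : (1 : ZMod 2).val = 1 := rfl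
  have hinj : Function.Injective f := by
    rw [injective_iff_map_eq_one]
    intro z hz
    have hfz : a ^ (z.toAdd.1.val) * b ^ (z.toAdd.2.val) = 1 := hz
    have hz1 : z.toAdd.1 = 0 ∧ z.toAdd.2 = 0 := by
      rcases hzmod z.toAdd.1 with hi | hi <;> rcases hzmod z.toAdd.2 with hj | hj <;>
        rw [hi, hj] at hfz <;>
        simp only [hval0, hval1, pow_zero, pow_one, one_mul, mul_one] at hfz
      · exact ⟨hi, hj⟩
      · exact absurd hfz hb1
      · exact absurd hfz ha
      · exfalso
        have hb' : b = a⁻¹ := by rw [eq_inv_iff_mul_eq_one, hcomm b a]; exact hfz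
        rw [hinv] at hb'
        exact hba hb'
    have : z.toAdd = 0 := Prod.ext hz1.1 hz1.2
    calc z = Multiplicative.ofAdd z.toAdd := rfl
    _ = Multiplicative.ofAdd 0 := by rw [this]
    _ = 1 := rfl
  have hbij : Function.Bijective f := by
    rw [Fintype.bijective_iff_injective_and_card]
    refine ⟨hinj, ?_⟩
    simp [hcard]
  exact ⟨(MulEquiv.ofBijective f hbij).symm⟩

open IntermediateField Module Polynomial

variable {F : Type*} {E : Type*} [Field F] [Field E] [Algebra F E]

/-- `relfinrank` only depends on the underlying subfields. -/
theorem relfinrank_congr_subfield {K : Type*} [Field K] [Algebra K E]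
    {A B : IntermediateField F E} {A' B' : IntermediateField K E}
    (hA : A.toSubfield = A'.toSubfield) (hB : B.toSubfield = B'.toSubfield) :
    relfinrank A B = relfinrank A' B' := by
  unfold IntermediateField.relfinrank
  rw [hA, hB]

theorem relfinrank_eq_one_iff_of_le {A B : IntermediateField F E} (h : A ≤ B) :
    relfinrank A B = 1 ↔ A = B := by
  constructor
  · intro h1
    rw [relfinrank_eq_finrank_of_le h, IntermediateField.finrank_eq_one_iff] at h1
    have h2 := congrArg (restrictScalars F) h1
    rw [extendScalars_restrictScalars] at h2
    have hbot : IntermediateField.restrictScalars F (⊥ : IntermediateField A E) = A := by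
      ext x
      simp only [mem_restrictScalars, IntermediateField.mem_bot]
      constructor
      · rintro ⟨y, rfl⟩; exact y.2
      · intro hx; exact ⟨⟨x, hx⟩, rfl⟩
    rw [hbot] at h2
    exact h2.symm
  · rintro rfl; exact relfinrank_self A

theorem middle_of_relfinrank_two {A M B : IntermediateField F E} (h1 : A ≤ M) (h2 : M ≤ B)
    (hr : relfinrank A B = 2) : M = A ∨ M = B := by
  have hmul := relfinrank_mul_relfinrank h1 h2
  rw [hr] at hmul
  have hd : relfinrank A M ∣ 2 := ⟨_, hmul.symm⟩
  rcases (Nat.prime_two.eq_one_or_self_of_dvd _ hd) with h | h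
  · left
    exact ((relfinrank_eq_one_iff_of_le h1).mp h).symm
  · right
    rw [h] at hmul
    have h1' : relfinrank M B = 1 := by omega
    exact (relfinrank_eq_one_iff_of_le h2).mp h1'

section Alg
variable [Algebra.IsAlgebraic F E]

theorem isIntegral_of_mem_tower (A : IntermediateField F E) (y : E) : IsIntegral A y := by
  haveI : Algebra.IsAlgebraic A E := Algebra.IsAlgebraic.tower_top (K := F) A
  exact (Algebra.IsAlgebraic.isAlgebraic (R := A) y).isIntegral

/-- relative degree after adjoining an element equals minpoly degree -/
theorem relfinrank_sup_adjoin_eq (A : IntermediateField F E) (y : E) :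
    relfinrank A (A ⊔ IntermediateField.adjoin F {y}) = (minpoly A y).natDegree := by
  have hle : A ≤ A ⊔ IntermediateField.adjoin F {y} := le_sup_left
  have hES : extendScalars hle = IntermediateField.adjoin A {y} := by
    apply restrictScalars_injective F
    rw [extendScalars_restrictScalars, restrictScalars_adjoin_eq_sup]
  rw [relfinrank_eq_finrank_of_le hle, hES]
  exact IntermediateField.adjoin.finrank (isIntegral_of_mem_tower A y)

theorem relfinrank_sup_adjoin_sq_dvd_two
    (A : IntermediateField F E) {y : E} (hy : y ^ 2 ∈ A) :
    relfinrank A (A ⊔ IntermediateField.adjoin F {y}) ∣ 2 := by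
  rw [relfinrank_sup_adjoin_eq A y]
  have hint : IsIntegral A y := isIntegral_of_mem_tower A y
  have hq : (Polynomial.X ^ 2 - Polynomial.C (⟨y ^ 2, hy⟩ : A) : Polynomial A) ≠ 0 :=
    Polynomial.X_pow_sub_C_ne_zero (by norm_num) _
  have hdvd : minpoly A y ∣ (Polynomial.X ^ 2 - Polynomial.C (⟨y ^ 2, hy⟩ : A)) := by
    apply minpoly.dvd
    simp only [map_sub, map_pow, Polynomial.aeval_X, Polynomial.aeval_C]
    have hc : (algebraMap A E) (⟨y ^ 2, hy⟩ : A) = y ^ 2 := rfl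
    rw [hc, sub_self]
  have hle2 := Polynomial.natDegree_le_of_dvd hdvd hq
  rw [Polynomial.natDegree_X_pow_sub_C] at hle2
  have hpos := minpoly.natDegree_pos hint
  interval_cases h : (minpoly A y).natDegree
  · exact one_dvd 2
  · exact dvd_rfl

/-- every quadratic extension in char zero is generated by a square root -/
theorem exists_sqrt_gen [CharZero E]
    {A B : IntermediateField F E} (h : A ≤ B) (hr : relfinrank A B = 2) :
    ∃ y : E, y ∈ B ∧ y ^ 2 ∈ A ∧ A ⊔ IntermediateField.adjoin F {y} = B := by
  have hne : A ≠ B := by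
    intro h'
    rw [(relfinrank_eq_one_iff_of_le h).mpr h'] at hr
    omega
  obtain ⟨x, hxB, hxA⟩ := SetLike.exists_of_lt (lt_of_le_of_ne h hne)
  have hM : A ⊔ IntermediateField.adjoin F {x} = B := by
    rcases middle_of_relfinrank_two (le_sup_left : A ≤ A ⊔ IntermediateField.adjoin F {x})
      (sup_le h (adjoin_le_iff.mpr (by simpa using hxB))) hr with hc | hc
    · exfalso
      apply hxA
      rw [← hc]
      exact (le_sup_right : IntermediateField.adjoin F {x} ≤ A ⊔ _)
        (IntermediateField.mem_adjoin_simple_self F x)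
    · exact hc
  have hdeg : (minpoly A x).natDegree = 2 := by
    rw [← relfinrank_sup_adjoin_eq A x, hM, hr]
  have hint : IsIntegral A x := isIntegral_of_mem_tower A x
  set q := minpoly A x with hqdef
  have hmonic : q.Monic := minpoly.monic hint
  have haeval : Polynomial.aeval x q = 0 := minpoly.aeval A x
  set b : E := algebraMap A E (q.coeff 1) with hbdef
  set c : E := algebraMap A E (q.coeff 0) with hcdef
  have hrel : x ^ 2 + b * x + c = 0 := by
    have hsum : Polynomial.aeval x q
        = ∑ i ∈ Finset.range (2 + 1), q.coeff i • x ^ i := by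
      rw [← hdeg]
      exact Polynomial.aeval_eq_sum_range (p := q) x
    rw [haeval] at hsum
    rw [Finset.sum_range_succ, Finset.sum_range_succ, Finset.sum_range_one] at hsum
    have hc2 : q.coeff 2 = 1 := by rw [← hdeg]; exact hmonic.coeff_natDegree
    rw [hc2] at hsum
    simp only [Algebra.smul_def, map_one, one_smul, pow_zero, pow_one, mul_one, one_mul] at hsum
    rw [← hbdef, ← hcdef] at hsum
    linear_combination -hsum
  have h2mem : ∀ (C : IntermediateField F E), (2 : E) ∈ C := fun C =>
    one_add_one_eq_two (R := E) ▸ C.add_mem C.one_mem C.one_mem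
  refine ⟨x + b / 2, ?_, ?_, ?_⟩
  · exact B.add_mem hxB (B.div_mem (h ((q.coeff 1).2)) (h2mem B))
  · have hy2 : (x + b / 2) ^ 2 = b ^ 2 / 4 - c := by
      linear_combination hrel
    rw [hy2]
    have hmap : b ^ 2 / 4 - c = algebraMap A E ((q.coeff 1) ^ 2 / 4 - q.coeff 0) := by
      rw [map_sub, map_div₀, map_pow, map_ofNat]
    rw [hmap]
    have hval : algebraMap A E ((q.coeff 1) ^ 2 / 4 - q.coeff 0)
        = ((((q.coeff 1) ^ 2 / 4 - q.coeff 0) : A) : E) := rfl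
    rw [hval]
    exact SetLike.coe_mem _
  · set y : E := x + b / 2 with hydef
    have hyB : y ∈ B := B.add_mem hxB (B.div_mem (h ((q.coeff 1).2)) (h2mem B))
    have hyA : y ∉ A := by
      intro hyA
      apply hxA
      have : x = y - b / 2 := by rw [hydef]; ring
      rw [this]
      exact A.sub_mem hyA (A.div_mem ((q.coeff 1).2) (h2mem A))
    rcases middle_of_relfinrank_two (le_sup_left : A ≤ A ⊔ IntermediateField.adjoin F {y})
      (sup_le h (adjoin_le_iff.mpr (by simpa using hyB))) hr with hc | hc
    · exfalso
      apply hyA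
      rw [← hc]
      exact (le_sup_right : IntermediateField.adjoin F {y} ≤ A ⊔ _)
        (IntermediateField.mem_adjoin_simple_self F y)
    · exact hc

/-- adjoining finitely many square roots gives a 2-power extension -/
theorem relfinrank_sup_adjoin_finset_sq (A : IntermediateField F E) (s : Finset E)
    (hs : ∀ y ∈ s, y ^ 2 ∈ A) :
    relfinrank A (A ⊔ IntermediateField.adjoin F (s : Set E)) ∣ 2 ^ s.card := by
  classical
  induction s using Finset.induction_on with
  | empty =>
    simp only [Finset.coe_empty, IntermediateField.adjoin_empty, sup_bot_eq,
      relfinrank_self, Finset.card_empty, pow_zero]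
    exact one_dvd 1
  | @insert a s ha ih =>
    have h1 : relfinrank A (A ⊔ IntermediateField.adjoin F (s : Set E)) ∣ 2 ^ s.card :=
      ih (fun y hy => hs y (Finset.mem_insert_of_mem hy))
    set B1 := A ⊔ IntermediateField.adjoin F (s : Set E) with hB1
    have hsets : ((insert a s : Finset E) : Set E) = {a} ∪ (s : Set E) := by
      rw [Finset.coe_insert, Set.insert_eq]
    have hsup : A ⊔ IntermediateField.adjoin F ((insert a s : Finset E) : Set E)
        = B1 ⊔ IntermediateField.adjoin F {a} := by
      rw [hsets, IntermediateField.adjoin_union, hB1]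
      rw [sup_assoc, sup_comm (IntermediateField.adjoin F {a}) _, ← sup_assoc]
    rw [hsup]
    have h2 : relfinrank B1 (B1 ⊔ IntermediateField.adjoin F {a}) ∣ 2 := by
      apply relfinrank_sup_adjoin_sq_dvd_two
      exact (le_sup_left : A ≤ B1) (hs a (Finset.mem_insert_self a s))
    have hmul := relfinrank_mul_relfinrank (le_sup_left : A ≤ B1)
      (le_sup_left : B1 ≤ B1 ⊔ IntermediateField.adjoin F {a})
    rw [Finset.card_insert_of_notMem ha, pow_succ]
    rw [← hmul]
    exact mul_dvd_mul h1 h2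

end Alg

theorem normal_adjoin_rootSet' {F E : Type*} [Field F] [Field E] [Algebra F E]
    [IsAlgClosed E] (p : Polynomial F) :
    Normal F (IntermediateField.adjoin F (p.rootSet E))
      ∧ FiniteDimensional F (IntermediateField.adjoin F (p.rootSet E)) := by
  haveI := IntermediateField.adjoin_rootSet_isSplittingField
    (IsAlgClosed.splits (p.map (algebraMap F E)))
  exact ⟨Normal.of_isSplittingField p, Polynomial.IsSplittingField.finiteDimensional _ p⟩

section Tower

open Module

local notation "Ω" => AlgebraicClosure ℚ

variable {F : ℕ → IntermediateField ℚ Ω}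

theorem tower_mono (hle : ∀ n, F n ≤ F (n + 1)) : Monotone F :=
  monotone_nat_of_le_succ hle

theorem tower_findim (hfin : FiniteDimensional ℚ (F 0))
    (hdeg : ∀ n, Module.finrank ℚ (F (n + 1)) = 2 * Module.finrank ℚ (F n)) :
    ∀ n, FiniteDimensional ℚ (F n) ∧ finrank ℚ (F n) = 2 ^ n * finrank ℚ (F 0) := by
  intro n
  induction n with
  | zero => exact ⟨hfin, by simp⟩
  | succ n ih =>
    obtain ⟨ihfin, ihrank⟩ := ih
    have hpos : 0 < finrank ℚ (F n) := finrank_pos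
    constructor
    · apply FiniteDimensional.of_finrank_pos
      rw [hdeg n]
      omega
    · rw [hdeg n, ihrank, pow_succ]
      ring

theorem tower_rel (hfin : FiniteDimensional ℚ (F 0))
    (hdeg : ∀ n, Module.finrank ℚ (F (n + 1)) = 2 * Module.finrank ℚ (F n))
    (hle : ∀ n, F n ≤ F (n + 1)) {i j : ℕ} (hij : i ≤ j) :
    IntermediateField.relfinrank (F i) (F j) = 2 ^ (j - i) := by
  have hmul := IntermediateField.finrank_bot_mul_relfinrank (tower_mono hle hij)
  have hi := tower_findim hfin hdeg i
  have hj := tower_findim hfin hdeg j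
  rw [hi.2, hj.2] at hmul
  haveI := hfin
  have hd0 : 0 < finrank ℚ (F 0) := finrank_pos
  have h2i : 0 < 2 ^ i * finrank ℚ (F 0) := by positivity
  apply Nat.eq_of_mul_eq_mul_left h2i
  have hj' : i + (j - i) = j := by omega
  rw [hmul, mul_right_comm, ← pow_add, hj']

theorem tower_inj (hfin : FiniteDimensional ℚ (F 0))
    (hdeg : ∀ n, Module.finrank ℚ (F (n + 1)) = 2 * Module.finrank ℚ (F n))
    {i j : ℕ} (h : F i = F j) : i = j := by
  have hi := tower_findim hfin hdeg i
  have hj := tower_findim hfin hdeg j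
  haveI := hfin
  have hd0 : 0 < finrank ℚ (F 0) := finrank_pos
  have : (2:ℕ) ^ i * finrank ℚ (F 0) = 2 ^ j * finrank ℚ (F 0) := by
    rw [← hi.2, ← hj.2, h]
  have h2 : (2:ℕ) ^ i = 2 ^ j := Nat.eq_of_mul_eq_mul_right hd0 this
  exact Nat.pow_right_injective (le_refl 2) h2

theorem tower_le_of_le_iSup (hle : ∀ n, F n ≤ F (n + 1))
    (L : IntermediateField ℚ Ω) (hL : L ≤ ⨆ n, F n) (hfinL : FiniteDimensional ℚ L) :
    ∃ m, L ≤ F m := by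
  classical
  have hdir : Directed (· ≤ ·) F := (tower_mono hle).directed_le
  set b := Module.finBasis ℚ L with hb
  have hmem : ∀ i, ∃ m, ((b i : L) : Ω) ∈ F m := by
    intro i
    have h1 : ((b i : L) : Ω) ∈ ⨆ n, F n := hL (b i).2
    rwa [← SetLike.mem_coe, IntermediateField.coe_iSup_of_directed hdir, Set.mem_iUnion] at h1
  choose nn hnn using hmem
  refine ⟨Finset.univ.sup nn, ?_⟩
  intro x hx
  have hxl : (⟨x, hx⟩ : L) = ∑ i, b.repr ⟨x, hx⟩ i • b i := (b.sum_repr ⟨x, hx⟩).symm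
  have hcoe : x = ∑ i, b.repr ⟨x, hx⟩ i • ((b i : L) : Ω) := by
    have := congrArg (L.val.toLinearMap) hxl
    rw [map_sum] at this; simp only [map_smul] at this; exact this
  rw [hcoe]
  apply sum_mem
  intro i _
  rw [Algebra.smul_def]
  apply mul_mem
  · exact (F _).algebraMap_mem _
  · exact tower_mono hle (Finset.le_sup (Finset.mem_univ i)) (hnn i)

end Tower

section LemmaB

open Module Polynomial

local notation "Ω" => AlgebraicClosure ℚ

variable {F : ℕ → IntermediateField ℚ Ω}

theorem extendScalars_toSubfield' {K L : Type*} [Field K] [Field L] [Algebra K L]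
    {A B : IntermediateField K L} (h : A ≤ B) :
    (IntermediateField.extendScalars h).toSubfield = B.toSubfield := by
  ext x
  rw [IntermediateField.mem_toSubfield, IntermediateField.mem_toSubfield,
    IntermediateField.mem_extendScalars]

theorem lemmaB (hfin : FiniteDimensional ℚ (F 0))
    (hdeg : ∀ n, Module.finrank ℚ (F (n + 1)) = 2 * Module.finrank ℚ (F n))
    (hle : ∀ n, F n ≤ F (n + 1)) (n : ℕ) :
    ∀ m, ∃ N : IntermediateField (↥(F n)) Ω,
      (∀ x, x ∈ F (n + m) → x ∈ N) ∧ Normal (↥(F n)) N ∧ FiniteDimensional (↥(F n)) N ∧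
      ∃ t, finrank (↥(F n)) N = 2 ^ t := by
  haveI : Algebra.IsAlgebraic ℚ Ω := AlgebraicClosure.isAlgebraic ℚ
  haveI : Algebra.IsAlgebraic (↥(F n)) Ω := Algebra.IsAlgebraic.tower_top (K := ℚ) (↥(F n))
  intro m
  induction m with
  | zero =>
    refine ⟨⊥, ?_, ?_, inferInstance, 0, IntermediateField.finrank_bot⟩
    · intro x hx
      rw [add_zero] at hx
      exact ⟨⟨x, hx⟩, rfl⟩
    · exact Normal.of_algEquiv (IntermediateField.botEquiv (↥(F n)) Ω).symm
  | succ m ih =>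
    obtain ⟨N, hN, hnorm, hfd, t, ht⟩ := ih
    have h1 : F n ≤ F (n + m) := tower_mono hle (Nat.le_add_right n m)
    have h2 : F n ≤ F (n + m + 1) := tower_mono hle (by omega)
    set A := IntermediateField.extendScalars h1 with hA
    set B := IntermediateField.extendScalars h2 with hB
    have hAB : A ≤ B := by
      intro x hx
      rw [hA, IntermediateField.mem_extendScalars] at hx
      rw [hB, IntermediateField.mem_extendScalars]
      exact hle _ hx
    have hrelAB : IntermediateField.relfinrank A B = 2 := by
      rw [relfinrank_congr_subfield (extendScalars_toSubfield' h1)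
        (extendScalars_toSubfield' h2)]
      have := tower_rel hfin hdeg hle (show n + m ≤ n + m + 1 by omega)
      simpa using this
    obtain ⟨γ, hγB, hγ2, hgen⟩ := exists_sqrt_gen hAB hrelAB
    have hcN : γ ^ 2 ∈ N := hN _ ((IntermediateField.mem_extendScalars h1).mp hγ2)
    have hcint : IsIntegral (↥(F n)) (γ ^ 2 : Ω) :=
      (Algebra.IsAlgebraic.isAlgebraic (γ ^ 2 : Ω)).isIntegral
    set P : Polynomial (↥(F n)) := (minpoly (↥(F n)) (γ ^ 2 : Ω)).comp (X ^ 2) with hP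
    have hPmonic : P.Monic := by
      apply Polynomial.Monic.comp (minpoly.monic hcint) (monic_X_pow 2)
      rw [natDegree_X_pow]
      omega
    set R := IntermediateField.adjoin (↥(F n)) (P.rootSet Ω) with hR
    obtain ⟨hRnorm, hRfd⟩ := normal_adjoin_rootSet' (E := Ω) P
    have hγroot : γ ∈ P.rootSet Ω := by
      rw [Polynomial.mem_rootSet]
      refine ⟨hPmonic.ne_zero, ?_⟩
      rw [hP, Polynomial.aeval_comp]
      simp only [map_pow, Polynomial.aeval_X]
      exact minpoly.aeval _ _
    refine ⟨N ⊔ R, ?_, ?_, ?_, ?_⟩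
    · intro x hx
      have hxB : x ∈ B := (IntermediateField.mem_extendScalars h2).mpr hx
      rw [← hgen] at hxB
      refine (sup_le_sup (show A ≤ N from ?_) (show IntermediateField.adjoin _ {γ} ≤ R from ?_)) hxB
      · intro z hz
        exact hN z ((IntermediateField.mem_extendScalars h1).mp hz)
      · apply IntermediateField.adjoin.mono
        simpa using hγroot
    · haveI := hnorm
      haveI := hRnorm
      infer_instance
    · haveI := hfd
      haveI := hRfd
      exact IntermediateField.finiteDimensional_sup N R
    · have hmul := IntermediateField.finrank_bot_mul_relfinrank
        (le_sup_left : N ≤ N ⊔ R)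
      have hfinite : (P.rootSet Ω).Finite := P.rootSet_finite Ω
      have hcoe : (hfinite.toFinset : Set Ω) = P.rootSet Ω := hfinite.coe_toFinset
      have hsq : ∀ y ∈ hfinite.toFinset, y ^ 2 ∈ N := by
        intro y hy
        rw [Set.Finite.mem_toFinset] at hy
        rw [Polynomial.mem_rootSet] at hy
        have hy2 : (Polynomial.aeval (y ^ 2 : Ω)) (minpoly (↥(F n)) (γ ^ 2 : Ω)) = 0 := by
          have := hy.2
          rw [hP, Polynomial.aeval_comp] at this
          simpa using this
        have hy2root : (y ^ 2 : Ω) ∈ (minpoly (↥(F n)) (γ ^ 2 : Ω)).rootSet Ω :=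
          Polynomial.mem_rootSet.mpr ⟨minpoly.ne_zero hcint, hy2⟩
        have hsplits : ((minpoly (↥(F n)) (γ ^ 2 : Ω)).map (algebraMap (↥(F n)) ↥N)).Splits := by
          have := hnorm.splits ⟨γ ^ 2, hcN⟩
          rw [← minpoly.algHom_eq N.val Subtype.val_injective ⟨γ ^ 2, hcN⟩] at this
          exact this
        rw [← hsplits.image_rootSet N.val] at hy2root
        obtain ⟨z, _, hz⟩ := hy2root
        rw [← hz]
        exact z.2
      have hdvd : IntermediateField.relfinrank N (N ⊔ R) ∣ 2 ^ hfinite.toFinset.card := by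
        have := relfinrank_sup_adjoin_finset_sq N hfinite.toFinset hsq
        rwa [hcoe, ← hR] at this
      obtain ⟨k, _, hk⟩ := (Nat.dvd_prime_pow Nat.prime_two).mp hdvd
      refine ⟨t + k, ?_⟩
      rw [← hmul, ht, hk, pow_add]

end LemmaB

section LemmaA

open Module

local notation "Ω" => AlgebraicClosure ℚ

variable {F : ℕ → IntermediateField ℚ Ω}

set_option maxHeartbeats 1000000 in
set_option synthInstance.maxHeartbeats 400000 in
theorem exists_middle_of_four_le (hfin : FiniteDimensional ℚ (F 0))
    (hdeg : ∀ n, Module.finrank ℚ (F (n + 1)) = 2 * Module.finrank ℚ (F n))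
    (hle : ∀ n, F n ≤ F (n + 1)) {n m : ℕ} {K : IntermediateField ℚ Ω}
    (hnK : F n ≤ K) (hKm : K ≤ F m)
    (h4 : 4 ≤ IntermediateField.relfinrank (F n) K) :
    ∃ X : IntermediateField ℚ Ω, F n < X ∧ X < K := by
  classical
  set κ := ↥(F n)
  haveI : Algebra.IsAlgebraic ℚ Ω := AlgebraicClosure.isAlgebraic ℚ
  haveI : Algebra.IsAlgebraic κ Ω := Algebra.IsAlgebraic.tower_top (K := ℚ) κ
  haveI : CharZero κ := charZero_of_injective_algebraMap (algebraMap ℚ κ).injective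
  haveI : PerfectField κ := PerfectField.ofCharZero
  -- n ≤ m
  have hnm : n ≤ m := by
    by_contra hc
    push_neg at hc
    have : K = F n := le_antisymm (hKm.trans (tower_mono hle (by omega))) hnK
    rw [(relfinrank_eq_one_iff_of_le hnK).mpr this.symm] at h4
    omega
  obtain ⟨N, hN, hnorm, hfd, t, ht⟩ := lemmaB hfin hdeg hle n (m - n)
  rw [show n + (m - n) = m by omega] at hN
  haveI := hfd
  haveI : Algebra.IsAlgebraic κ ↥N := Algebra.IsAlgebraic.of_finite κ ↥N
  haveI : Algebra.IsSeparable κ ↥N := Algebra.IsAlgebraic.isSeparable_of_perfectField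
  haveI : IsGalois κ ↥N := { __ := hnorm }
  set Kk := IntermediateField.extendScalars hnK with hKk
  have hKkN : Kk ≤ N := by
    intro x hx
    exact hN x (hKm ((IntermediateField.mem_extendScalars hnK).mp hx))
  set KN := IntermediateField.comap N.val Kk with hKN
  -- Galois group is a 2-group
  have hcardG : Fintype.card (↥N ≃ₐ[κ] ↥N) = 2 ^ t := by
    rw [← Nat.card_eq_fintype_card, IsGalois.card_aut_eq_finrank, ht]
  have hpG : IsPGroup 2 (↥N ≃ₐ[κ] ↥N) :=
    IsPGroup.of_card (by rw [Nat.card_eq_fintype_card, hcardG])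
  set Γ := KN.fixingSubgroup with hΓ
  -- degrees
  have hr1 : finrank ↥KN ↥N = IntermediateField.relfinrank Kk N := by
    have := IntermediateField.finrank_comap Kk N.val
    rwa [IntermediateField.fieldRange_val] at this
  have hcardΓ : Fintype.card Γ = IntermediateField.relfinrank Kk N :=
    (Nat.card_eq_fintype_card.symm.trans (IsGalois.card_fixingSubgroup_eq_finrank KN)).trans hr1
  have hdK : IntermediateField.relfinrank (⊥ : IntermediateField κ Ω) Kk
      = IntermediateField.relfinrank (F n) K := by
    apply relfinrank_congr_subfield
    · ext x
      simp only [IntermediateField.mem_toSubfield, IntermediateField.mem_bot]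
      constructor
      · rintro ⟨y, rfl⟩; exact y.2
      · intro hx; exact ⟨⟨x, hx⟩, rfl⟩
    · exact (extendScalars_toSubfield' hnK).symm
  have hsplit : IntermediateField.relfinrank (⊥ : IntermediateField κ Ω) Kk
      * IntermediateField.relfinrank Kk N = 2 ^ t := by
    rw [IntermediateField.relfinrank_mul_relfinrank bot_le hKkN,
      IntermediateField.relfinrank_bot_left, ht]
  have hrpos : IntermediateField.relfinrank Kk N ≠ 0 := by
    intro h0
    rw [h0, mul_zero] at hsplit
    exact (pow_ne_zero t (by norm_num)) hsplit.symm
  have hidx : Γ.index = IntermediateField.relfinrank (F n) K := by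
    have h1 := Subgroup.index_mul_card Γ
    rw [Nat.card_eq_fintype_card, Nat.card_eq_fintype_card, hcardΓ, hcardG] at h1
    rw [← hdK] at h4 ⊢
    have := hsplit
    exact Nat.eq_of_mul_eq_mul_right (Nat.pos_of_ne_zero hrpos) (h1.trans this.symm)
  obtain ⟨U, hU1, hU2⟩ := pgroup_exists_strict_between hpG (by rw [hidx]; exact h4)
  set X0 := IntermediateField.fixedField U with hX0
  have hffΓ : IntermediateField.fixedField Γ = KN := IsGalois.fixedField_fixingSubgroup KN
  have hX0le : X0 ≤ KN := by
    rw [← hffΓ]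
    rw [IntermediateField.le_iff_le, IntermediateField.fixingSubgroup_fixedField]
    exact hU1.le
  have hX0ne : X0 ≠ KN := by
    intro h
    have := congrArg IntermediateField.fixingSubgroup h
    rw [IntermediateField.fixingSubgroup_fixedField, ← hΓ] at this
    exact absurd this (ne_of_lt hU1).symm
  have hX0nebot : X0 ≠ ⊥ := by
    intro h
    have := congrArg IntermediateField.fixingSubgroup h
    rw [IntermediateField.fixingSubgroup_fixedField, IntermediateField.fixingSubgroup_bot] at this
    exact absurd this (ne_of_lt hU2)
  set X : IntermediateField ℚ Ω :=
    IntermediateField.restrictScalars ℚ (IntermediateField.map N.val X0) with hX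
  have hFnX : F n ≤ X := by
    intro x hx
    refine ⟨algebraMap κ ↥N ⟨x, hx⟩, X0.algebraMap_mem _, ?_⟩
    show ((algebraMap κ ↥N ⟨x, hx⟩ : ↥N) : Ω) = x
    rw [IntermediateField.coe_algebraMap_apply]
    rfl
  have hXK : X ≤ K := by
    rintro x ⟨z, hz, rfl⟩
    have : N.val z ∈ Kk := hX0le hz
    exact (IntermediateField.mem_extendScalars hnK).mp this
  have hXneFn : X ≠ F n := by
    intro h
    apply hX0nebot
    apply le_antisymm _ bot_le
    intro z hz
    have hzX : N.val z ∈ X := ⟨z, hz, rfl⟩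
    rw [h] at hzX
    refine ⟨⟨N.val z, hzX⟩, ?_⟩
    apply Subtype.val_injective
    show ((algebraMap κ ↥N ⟨N.val z, hzX⟩ : ↥N) : Ω) = (z : Ω)
    rw [IntermediateField.coe_algebraMap_apply]
    rfl
  have hXneK : X ≠ K := by
    intro h
    apply hX0ne
    apply le_antisymm hX0le
    intro z hz
    have h1 : N.val z ∈ K := (IntermediateField.mem_extendScalars hnK).mp hz
    rw [← h] at h1
    obtain ⟨w, hw, hval⟩ := h1
    rwa [show w = z from Subtype.val_injective hval] at hw
  exact ⟨X, lt_of_le_of_ne hFnX (Ne.symm hXneFn), lt_of_le_of_ne hXK hXneK⟩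

end LemmaA

theorem subgroup_card_two_of_cyclic {G : Type*} [Group G] [Fintype G]
    (hc : Fintype.card G = 4) {σ : G} (hσ : orderOf σ = 4) {H : Subgroup G}
    (hH : Nat.card H = 2) : H = Subgroup.zpowers (σ ^ 2) := by
  have htop : Subgroup.zpowers σ = ⊤ :=
    Subgroup.eq_top_of_card_eq _ (by rw [Nat.card_zpowers, hσ, Nat.card_eq_fintype_card, hc])
  have hord2 : orderOf (σ ^ 2) = 2 := by
    rw [orderOf_pow, hσ]
    norm_num
  have hle : H ≤ Subgroup.zpowers (σ ^ 2) := by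
    intro h hh
    haveI : Fintype ↥H := Fintype.ofFinite _
    have hsq : h ^ 2 = 1 := by
      have h1 : orderOf (⟨h, hh⟩ : H) ∣ 2 := by
        rw [← hH, Nat.card_eq_fintype_card]
        exact orderOf_dvd_card
      have h2 : orderOf h ∣ 2 := by
        rwa [Subgroup.orderOf_mk] at h1
      exact orderOf_dvd_iff_pow_eq_one.mp h2
    have hmem : h ∈ Subgroup.zpowers σ := htop ▸ Subgroup.mem_top h
    obtain ⟨k, rfl⟩ := Subgroup.mem_zpowers_iff.mp hmem
    have hz : σ ^ (2 * k) = 1 := by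
      rw [mul_comm, zpow_mul]
      rw [show ((2:ℤ)) = ((2:ℕ):ℤ) by norm_num, zpow_natCast]
      exact hsq
    have h4 : ((orderOf σ : ℤ)) ∣ 2 * k := orderOf_dvd_iff_zpow_eq_one.mpr hz
    rw [hσ] at h4
    have h2k : (2 : ℤ) ∣ k := by
      push_cast at h4
      omega
    obtain ⟨l, rfl⟩ := h2k
    refine ⟨l, ?_⟩
    show (σ ^ (2:ℕ)) ^ l = σ ^ (2 * l)
    rw [← zpow_natCast σ 2, ← zpow_mul]
    norm_num
  apply Subgroup.eq_of_le_of_card_ge hle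
  rw [Nat.card_zpowers, hord2, hH]

section Klein

open Module

local notation "Ω" => AlgebraicClosure ℚ

variable {F : ℕ → IntermediateField ℚ Ω}

theorem bot_toSubfield_eq (n : ℕ) :
    ((⊥ : IntermediateField (↥(F n)) Ω)).toSubfield = (F n).toSubfield := by
  ext x
  simp only [IntermediateField.mem_toSubfield, IntermediateField.mem_bot]
  constructor
  · rintro ⟨y, rfl⟩; exact y.2
  · intro hx; exact ⟨⟨x, hx⟩, rfl⟩

set_option maxHeartbeats 1000000 in
set_option synthInstance.maxHeartbeats 400000 in
theorem klein_of_quadratic (hfin : FiniteDimensional ℚ (F 0))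
    (hdeg : ∀ n, Module.finrank ℚ (F (n + 1)) = 2 * Module.finrank ℚ (F n))
    (hle : ∀ n, F n ≤ F (n + 1)) {n : ℕ} {K : IntermediateField ℚ Ω}
    (hnK : F n ≤ K) (hK2 : K ≤ F (n + 2))
    (hrel : IntermediateField.relfinrank (F n) K = 2) (hne : K ≠ F (n + 1)) :
    ∃ h : F n ≤ F (n + 2),
      IsGalois (↥(F n)) (IntermediateField.extendScalars h) ∧
      Nonempty ((IntermediateField.extendScalars h ≃ₐ[↥(F n)] IntermediateField.extendScalars h)
        ≃* (Multiplicative (ZMod 2 × ZMod 2))) := by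
  classical
  set κ := ↥(F n)
  haveI : Algebra.IsAlgebraic ℚ Ω := AlgebraicClosure.isAlgebraic ℚ
  haveI : Algebra.IsAlgebraic κ Ω := Algebra.IsAlgebraic.tower_top (K := ℚ) κ
  haveI : CharZero κ := charZero_of_injective_algebraMap (algebraMap ℚ κ).injective
  haveI : PerfectField κ := PerfectField.ofCharZero
  have h : F n ≤ F (n + 2) := tower_mono hle (by omega)
  have hn1 : F n ≤ F (n + 1) := hle n
  have hrel01 : IntermediateField.relfinrank (F n) (F (n + 1)) = 2 := by
    have := tower_rel hfin hdeg hle (show n ≤ n + 1 by omega); simpa using this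
  have hrel12 : IntermediateField.relfinrank (F (n + 1)) (F (n + 2)) = 2 := by
    have := tower_rel hfin hdeg hle (show n + 1 ≤ n + 2 by omega); simpa using this
  have hrel02 : IntermediateField.relfinrank (F n) (F (n + 2)) = 4 := by
    have := tower_rel hfin hdeg hle (show n ≤ n + 2 by omega); simpa using this
  -- K is not contained in F (n+1)
  have hKn1 : ¬ K ≤ F (n + 1) := by
    intro hc
    rcases middle_of_relfinrank_two hnK hc hrel01 with h' | h'
    · rw [(relfinrank_eq_one_iff_of_le hnK).mpr h'.symm] at hrel; omega
    · exact hne h'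
  -- ℚ-world compositum
  have hsupQ : K ⊔ F (n + 1) = F (n + 2) := by
    have hle1 : F (n + 1) ≤ K ⊔ F (n + 1) := le_sup_right
    have hle2 : K ⊔ F (n + 1) ≤ F (n + 2) := sup_le hK2 (hle (n + 1))
    rcases middle_of_relfinrank_two hle1 hle2 hrel12 with h' | h'
    · exfalso; exact hKn1 (le_sup_left.trans h'.le)
    · exact h'
  set E := IntermediateField.extendScalars h with hE
  set A1 := IntermediateField.extendScalars hnK with hA1
  set A2 := IntermediateField.extendScalars hn1 with hA2
  have hA1E : A1 ≤ E := fun x hx => by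
    rw [hA1, IntermediateField.mem_extendScalars] at hx
    rw [hE, IntermediateField.mem_extendScalars]; exact hK2 hx
  have hA2E : A2 ≤ E := fun x hx => by
    rw [hA2, IntermediateField.mem_extendScalars] at hx
    rw [hE, IntermediateField.mem_extendScalars]; exact hle (n + 1) hx
  have hsup : A1 ⊔ A2 = E := by
    apply le_antisymm (sup_le hA1E hA2E)
    intro x hx
    rw [hE, IntermediateField.mem_extendScalars] at hx
    rw [← hsupQ] at hx
    have hKle : K ≤ IntermediateField.restrictScalars ℚ (A1 ⊔ A2) := by
      intro z hz
      exact (le_sup_left : A1 ≤ A1 ⊔ A2) ((IntermediateField.mem_extendScalars hnK).mpr hz)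
    have hF1le : F (n + 1) ≤ IntermediateField.restrictScalars ℚ (A1 ⊔ A2) := by
      intro z hz
      exact (le_sup_right : A2 ≤ A1 ⊔ A2) ((IntermediateField.mem_extendScalars hn1).mpr hz)
    exact (sup_le hKle hF1le) hx
  -- square root generators
  have hbotrel1 : IntermediateField.relfinrank (⊥ : IntermediateField κ Ω) A1 = 2 := by
    rw [← relfinrank_congr_subfield (bot_toSubfield_eq n).symm (extendScalars_toSubfield' hnK).symm]
    exact hrel
  have hbotrel2 : IntermediateField.relfinrank (⊥ : IntermediateField κ Ω) A2 = 2 := by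
    rw [← relfinrank_congr_subfield (bot_toSubfield_eq n).symm (extendScalars_toSubfield' hn1).symm]
    exact hrel01
  obtain ⟨γ, hγ1, hγ2, hγgen⟩ := exists_sqrt_gen (bot_le : ⊥ ≤ A1) hbotrel1
  obtain ⟨δ, hδ1, hδ2, hδgen⟩ := exists_sqrt_gen (bot_le : ⊥ ≤ A2) hbotrel2
  rw [bot_sup_eq] at hγgen hδgen
  -- each adjoin of a square root is normal
  have hnormal_adj : ∀ y : Ω, y ^ 2 ∈ (⊥ : IntermediateField κ Ω) →
      Normal κ ↥(IntermediateField.adjoin κ ({y} : Set Ω)) := by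
    intro y hy
    obtain ⟨c, hc⟩ := IntermediateField.mem_bot.mp hy
    set q : Polynomial κ := Polynomial.X ^ 2 - Polynomial.C c with hq
    have hqne : q ≠ 0 := Polynomial.X_pow_sub_C_ne_zero (by norm_num) c
    have hyroot : y ∈ q.rootSet Ω := by
      rw [Polynomial.mem_rootSet]
      refine ⟨hqne, ?_⟩
      simp only [hq, map_sub, map_pow, Polynomial.aeval_X, Polynomial.aeval_C]
      rw [hc]
      ring
    have hadj : IntermediateField.adjoin κ (q.rootSet Ω) = IntermediateField.adjoin κ {y} := by
      apply le_antisymm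
      · rw [IntermediateField.adjoin_le_iff]
        intro z hz
        rw [Polynomial.mem_rootSet] at hz
        have hz2 : z ^ 2 = y ^ 2 := by
          have := hz.2
          simp only [hq, map_sub, map_pow, Polynomial.aeval_X, Polynomial.aeval_C] at this
          rw [hc] at this
          linear_combination this
        have hfac : (z - y) * (z + y) = 0 := by linear_combination hz2
        rcases mul_eq_zero.mp hfac with h' | h'
        · have : z = y := by linear_combination h'
          rw [this]
          exact IntermediateField.mem_adjoin_simple_self κ y
        · have : z = -y := by linear_combination h'
          rw [this]
          exact (IntermediateField.adjoin κ {y}).neg_mem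
            (IntermediateField.mem_adjoin_simple_self κ y)
      · apply IntermediateField.adjoin.mono
        simpa using hyroot
    rw [← hadj]
    exact (normal_adjoin_rootSet' (E := Ω) q).1
  haveI hng : Normal κ ↥(IntermediateField.adjoin κ ({γ} : Set Ω)) := hnormal_adj γ hγ2
  haveI hnd : Normal κ ↥(IntermediateField.adjoin κ ({δ} : Set Ω)) := hnormal_adj δ hδ2
  have hnormE : Normal κ ↥E := by
    have h1 : Normal κ ↥(IntermediateField.adjoin κ ({γ} : Set Ω)
        ⊔ IntermediateField.adjoin κ ({δ} : Set Ω)) := inferInstance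
    rw [hγgen, hδgen] at h1
    rwa [hsup] at h1
  -- finite dimensionality and rank 4
  have hrankE : finrank κ ↥E = 4 := by
    have h1 : IntermediateField.relfinrank (⊥ : IntermediateField κ Ω) E = 4 := by
      rw [← relfinrank_congr_subfield (bot_toSubfield_eq n).symm (extendScalars_toSubfield' h).symm]
      exact hrel02
    rwa [IntermediateField.relfinrank_bot_left] at h1
  haveI hfdE : FiniteDimensional κ ↥E := FiniteDimensional.of_finrank_pos (by omega)
  haveI : Algebra.IsAlgebraic κ ↥E := Algebra.IsAlgebraic.of_finite κ ↥E
  haveI : Algebra.IsSeparable κ ↥E := Algebra.IsAlgebraic.isSeparable_of_perfectField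
  haveI hgal : IsGalois κ ↥E := { __ := hnormE }
  -- the Galois group has order 4
  have hcardG : Fintype.card (↥E ≃ₐ[κ] ↥E) = 4 := by
    rw [← Nat.card_eq_fintype_card, IsGalois.card_aut_eq_finrank, hrankE]
  -- two distinct intermediate fields of degree 2
  set KE := IntermediateField.comap E.val A1 with hKE
  set ME := IntermediateField.comap E.val A2 with hME
  have hrelK2 : IntermediateField.relfinrank A1 E = 2 := by
    have hmul := IntermediateField.relfinrank_mul_relfinrank
      (show (F n) ≤ K from hnK) (show K ≤ F (n + 2) from hK2)
    rw [hrel, hrel02] at hmul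
    have h2 : IntermediateField.relfinrank K (F (n + 2)) = 2 := by omega
    rw [relfinrank_congr_subfield (extendScalars_toSubfield' hnK).symm
      (extendScalars_toSubfield' h).symm] at h2
    exact h2
  have hrelM2 : IntermediateField.relfinrank A2 E = 2 := by
    rw [relfinrank_congr_subfield (extendScalars_toSubfield' hn1).symm
      (extendScalars_toSubfield' h).symm] at hrel12
    exact hrel12
  have hcardKE : Fintype.card (KE.fixingSubgroup) = 2 := by
    rw [← Nat.card_eq_fintype_card, IsGalois.card_fixingSubgroup_eq_finrank]
    have := IntermediateField.finrank_comap A1 E.val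
    rw [IntermediateField.fieldRange_val] at this
    rw [hKE, this, hrelK2]
  have hcardME : Fintype.card (ME.fixingSubgroup) = 2 := by
    rw [← Nat.card_eq_fintype_card, IsGalois.card_fixingSubgroup_eq_finrank]
    have := IntermediateField.finrank_comap A2 E.val
    rw [IntermediateField.fieldRange_val] at this
    rw [hME, this, hrelM2]
  have hKM : KE ≠ ME := by
    intro hc
    apply hne
    have h1 := IntermediateField.map_comap_eq E.val A1
    have h2 := IntermediateField.map_comap_eq E.val A2
    rw [IntermediateField.fieldRange_val] at h1 h2
    rw [inf_of_le_left hA1E] at h1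
    rw [inf_of_le_left hA2E] at h2
    have h3 : A1 = A2 := by
      have h5 := congrArg (IntermediateField.map E.val) hc
      rw [hKE, hME] at h5
      rwa [h1, h2] at h5
    have h4 := congrArg (IntermediateField.restrictScalars ℚ) h3
    ext x
    rw [← IntermediateField.mem_extendScalars hnK, ← IntermediateField.mem_extendScalars hn1,
      ← hA1, ← hA2, h3]
  -- no element of order 4
  have hsq : ∀ σ : (↥E ≃ₐ[κ] ↥E), σ ^ 2 = 1 := by
    intro σ
    have hdvd : orderOf σ ∣ 4 := hcardG ▸ orderOf_dvd_card
    have hne4 : orderOf σ ≠ 4 := by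
      intro ho
      apply hKM
      have e1 : KE.fixingSubgroup = Subgroup.zpowers (σ ^ 2) :=
        subgroup_card_two_of_cyclic hcardG ho (by rw [Nat.card_eq_fintype_card]; exact hcardKE)
      have e2 : ME.fixingSubgroup = Subgroup.zpowers (σ ^ 2) :=
        subgroup_card_two_of_cyclic hcardG ho (by rw [Nat.card_eq_fintype_card]; exact hcardME)
      have := e1.trans e2.symm
      calc KE = IntermediateField.fixedField KE.fixingSubgroup :=
            (IsGalois.fixedField_fixingSubgroup KE).symm
        _ = IntermediateField.fixedField ME.fixingSubgroup := by rw [this]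
        _ = ME := IsGalois.fixedField_fixingSubgroup ME
    have hd2 : orderOf σ ∣ 2 := by
      have hdvd' : orderOf σ ∣ 2 ^ 2 := by
        rw [show (2:ℕ)^2 = 4 by norm_num]
        exact hdvd
      rcases (Nat.dvd_prime_pow Nat.prime_two).mp hdvd' with ⟨i, hi, ho⟩
      interval_cases i
      · rw [ho]; exact one_dvd 2
      · rw [ho]; norm_num
      · exact absurd ho (by rw [show (2:ℕ)^2 = 4 by norm_num]; exact hne4)
    exact orderOf_dvd_iff_pow_eq_one.mp hd2
  exact ⟨h, hgal, klein_of_card_four hcardG hsq⟩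

end Klein

section Converse

open Module

local notation "Ω" => AlgebraicClosure ℚ

variable {F : ℕ → IntermediateField ℚ Ω}

theorem findim_of_le_findim {A B : IntermediateField ℚ Ω} (hAB : A ≤ B)
    (hB : FiniteDimensional ℚ B) : FiniteDimensional ℚ A := by
  haveI : FiniteDimensional ℚ B.toSubalgebra.toSubmodule := hB
  exact Submodule.finiteDimensional_of_le
    (show A.toSubalgebra.toSubmodule ≤ B.toSubalgebra.toSubmodule from hAB)

theorem restrictScalars_toSubfield_eq {n : ℕ} (X : IntermediateField (↥(F n)) Ω) :
    (IntermediateField.restrictScalars ℚ X).toSubfield = X.toSubfield := by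
  ext x
  simp only [IntermediateField.mem_toSubfield, IntermediateField.mem_restrictScalars]

set_option maxHeartbeats 1000000 in
set_option synthInstance.maxHeartbeats 400000 in
theorem not_thin_of_klein (hfin : FiniteDimensional ℚ (F 0))
    (hdeg : ∀ n, Module.finrank ℚ (F (n + 1)) = 2 * Module.finrank ℚ (F n))
    (hle : ∀ n, F n ≤ F (n + 1)) {n : ℕ} (h : F n ≤ F (n + 2))
    (hgal : IsGalois (↥(F n)) (IntermediateField.extendScalars h))
    (hk : Nonempty ((IntermediateField.extendScalars h ≃ₐ[↥(F n)] IntermediateField.extendScalars h)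
      ≃* (Multiplicative (ZMod 2 × ZMod 2)))) :
    ∃ L : IntermediateField ℚ Ω, F 0 ≤ L ∧ L ≤ (⨆ k, F k) ∧ FiniteDimensional ℚ L ∧
      ∀ j, L ≠ F j := by
  classical
  obtain ⟨e⟩ := hk
  set κ := ↥(F n)
  set E := IntermediateField.extendScalars h with hE
  haveI := hfin
  have hd0 : 0 < finrank ℚ (F 0) := finrank_pos
  have hrankE : finrank κ ↥E = 4 := by
    have h1 : IntermediateField.relfinrank (⊥ : IntermediateField κ Ω) E = 4 := by
      rw [← relfinrank_congr_subfield (bot_toSubfield_eq n).symm (extendScalars_toSubfield' h).symm]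
      have := tower_rel hfin hdeg hle (show n ≤ n + 2 by omega)
      simpa using this
    rwa [IntermediateField.relfinrank_bot_left] at h1
  haveI hfdE : FiniteDimensional κ ↥E := FiniteDimensional.of_finrank_pos (by omega)
  -- every automorphism squares to one
  have hsq : ∀ σ : (↥E ≃ₐ[κ] ↥E), σ ^ 2 = 1 := by
    intro σ
    have hv : ∀ v : Multiplicative (ZMod 2 × ZMod 2), v ^ 2 = 1 := by decide
    apply e.injective
    rw [map_pow, map_one]
    exact hv (e σ)
  have hFn1E : ∀ x, x ∈ F (n + 1) → x ∈ E := by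
    intro x hx
    rw [hE, IntermediateField.mem_extendScalars]
    exact hle (n + 1) hx
  -- there is an automorphism moving some element of F (n+1)
  have hmove : ∃ (σ : ↥E ≃ₐ[κ] ↥E) (x : ↥E), (x : Ω) ∈ F (n + 1) ∧ σ x ≠ x := by
    by_contra hall
    push_neg at hall
    have hff : IntermediateField.fixedField (⊤ : Subgroup (↥E ≃ₐ[κ] ↥E)) = ⊥ := by
      rw [← IntermediateField.fixingSubgroup_bot (F := κ) (E := ↥E)]
      exact IsGalois.fixedField_fixingSubgroup ⊥
    have hle1 : F (n + 1) ≤ F n := by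
      intro x hx
      have hxE : x ∈ E := hFn1E x hx
      have hmem : (⟨x, hxE⟩ : ↥E) ∈
          IntermediateField.fixedField (⊤ : Subgroup (↥E ≃ₐ[κ] ↥E)) := by
        intro g
        exact hall g.1 ⟨x, hxE⟩ hx
      rw [hff] at hmem
      obtain ⟨y, hy⟩ := IntermediateField.mem_bot.mp hmem
      have : (y : Ω) = x := by
        have := congrArg (E.val) hy
        rwa [show E.val (algebraMap κ ↥E y) = (y : Ω) from by
          rw [show (E.val) (algebraMap κ ↥E y) = ((algebraMap κ ↥E y : ↥E) : Ω) from rfl,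
            IntermediateField.coe_algebraMap_apply]; rfl] at this
      rw [← this]
      exact y.2
    have heq : F (n + 1) = F n := le_antisymm hle1 (hle n)
    have := tower_inj hfin hdeg heq
    omega
  obtain ⟨σ, x₀, hx₀, hσx₀⟩ := hmove
  have hσne : σ ≠ 1 := by
    intro h1
    rw [h1] at hσx₀
    exact hσx₀ rfl
  haveI : Fact (Nat.Prime 2) := ⟨Nat.prime_two⟩
  have hordσ : orderOf σ = 2 := orderOf_eq_prime (hsq σ) hσne
  set Kfix := IntermediateField.fixedField (Subgroup.zpowers σ) with hKfix
  have hrankKfixE : finrank ↥Kfix ↥E = 2 := by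
    rw [hKfix, IntermediateField.finrank_fixedField_eq_card]
    rw [Nat.card_zpowers, hordσ]
  have hrankKfix : finrank κ ↥Kfix = 2 := by
    have hmul := Module.finrank_mul_finrank κ ↥Kfix ↥E
    rw [hrankKfixE, hrankE] at hmul
    omega
  set L : IntermediateField ℚ Ω :=
    IntermediateField.restrictScalars ℚ (IntermediateField.map E.val Kfix) with hL
  have hFnL : F n ≤ L := by
    intro x hx
    refine ⟨algebraMap κ ↥E ⟨x, hx⟩, Kfix.algebraMap_mem _, ?_⟩
    show ((algebraMap κ ↥E ⟨x, hx⟩ : ↥E) : Ω) = x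
    rw [IntermediateField.coe_algebraMap_apply]
    rfl
  have hLF2 : L ≤ F (n + 2) := by
    rintro x ⟨z, hz, rfl⟩
    exact (IntermediateField.mem_extendScalars h).mp (SetLike.coe_mem z)
  have hfinL : FiniteDimensional ℚ L :=
    findim_of_le_findim hLF2 (tower_findim hfin hdeg (n + 2)).1
  have hrankL : finrank ℚ L = finrank ℚ (F (n + 1)) := by
    have hrel : IntermediateField.relfinrank (F n) L = 2 := by
      have h1 : IntermediateField.relfinrank (F n) L
          = IntermediateField.relfinrank (⊥ : IntermediateField κ Ω)
            (IntermediateField.map E.val Kfix) :=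
        relfinrank_congr_subfield (bot_toSubfield_eq n).symm
          (restrictScalars_toSubfield_eq (IntermediateField.map E.val Kfix))
      have h2 : (⊥ : IntermediateField κ Ω)
          = IntermediateField.map E.val (⊥ : IntermediateField κ ↥E) := by
        rw [IntermediateField.map_bot]
      rw [h1, h2, IntermediateField.relfinrank_map_map,
        IntermediateField.relfinrank_bot_left, hrankKfix]
    have hmul := IntermediateField.finrank_bot_mul_relfinrank hFnL
    rw [hrel] at hmul
    rw [← hmul, hdeg n]
    ring
  refine ⟨L, (tower_mono hle (Nat.zero_le n)).trans hFnL, hLF2.trans (le_iSup F (n + 2)), hfinL, ?_⟩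
  intro j hLj
  have hj : j = n + 1 := by
    have hfj := (tower_findim hfin hdeg j).2
    have hfn1 := (tower_findim hfin hdeg (n + 1)).2
    have : (2:ℕ) ^ j * finrank ℚ (F 0) = 2 ^ (n + 1) * finrank ℚ (F 0) := by
      rw [← hfj, ← hfn1, ← hLj, hrankL]
    exact Nat.pow_right_injective (le_refl 2) (Nat.eq_of_mul_eq_mul_right hd0 this)
  rw [hj] at hLj
  have hx₀L : (x₀ : Ω) ∈ L := by rw [hLj]; exact hx₀
  obtain ⟨z, hzK, hzval⟩ := hx₀L
  have hzx : z = x₀ := Subtype.val_injective hzval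
  rw [hzx] at hzK
  have : σ x₀ = x₀ := hzK ⟨σ, Subgroup.mem_zpowers σ⟩
  exact hσx₀ this

end Converse

section Main

open Module

local notation "Ω" => AlgebraicClosure ℚ

variable {F : ℕ → IntermediateField ℚ Ω}

theorem finrank_lt_of_lt {A B : IntermediateField ℚ Ω} (hAB : A < B)
    (hB : FiniteDimensional ℚ B) : finrank ℚ A < finrank ℚ B := by
  haveI : FiniteDimensional ℚ B.toSubalgebra.toSubmodule := hB
  have h1 : A.toSubalgebra.toSubmodule < B.toSubalgebra.toSubmodule := by
    constructor
    · exact fun x hx => hAB.le hx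
    · intro hc
      have : B ≤ A := fun x hx => hc hx
      exact absurd (le_antisymm hAB.le this) (ne_of_lt hAB)
  exact Submodule.finrank_lt_finrank_of_lt h1

set_option maxHeartbeats 1000000 in
theorem forward_direction (hfin : FiniteDimensional ℚ (F 0))
    (hdeg : ∀ n, Module.finrank ℚ (F (n + 1)) = 2 * Module.finrank ℚ (F n))
    (hle : ∀ n, F n ≤ F (n + 1))
    (L0 : IntermediateField ℚ Ω) (hL0a : F 0 ≤ L0) (hL0b : L0 ≤ ⨆ k, F k)
    (hL0c : FiniteDimensional ℚ L0) (hL0d : ∀ j, L0 ≠ F j) :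
    ∃ n, ∃ h : F n ≤ F (n + 2),
      IsGalois (↥(F n)) (IntermediateField.extendScalars h) ∧
      Nonempty ((IntermediateField.extendScalars h ≃ₐ[↥(F n)] IntermediateField.extendScalars h)
        ≃* (Multiplicative (ZMod 2 × ZMod 2))) := by
  classical
  haveI := hfin
  have hd0 : 0 < finrank ℚ (F 0) := finrank_pos
  set P : ℕ → Prop := fun r => ∃ K : IntermediateField ℚ Ω, (F 0 ≤ K) ∧ (K ≤ ⨆ k, F k) ∧
    FiniteDimensional ℚ K ∧ (∀ j, K ≠ F j) ∧ finrank ℚ K = r with hP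
  have hPex : ∃ r, P r := ⟨finrank ℚ L0, L0, hL0a, hL0b, hL0c, hL0d, rfl⟩
  obtain ⟨K, hK0, hKsup, hKfd, hKne, hKrank⟩ := Nat.find_spec hPex
  haveI := hKfd
  have hmin : ∀ K' : IntermediateField ℚ Ω, F 0 ≤ K' → K' ≤ (⨆ k, F k) →
      FiniteDimensional ℚ K' → (∀ j, K' ≠ F j) → finrank ℚ K ≤ finrank ℚ K' := by
    intro K' h1 h2 h3 h4
    rw [hKrank]
    exact Nat.find_min' hPex ⟨K', h1, h2, h3, h4, rfl⟩
  -- the largest n with F n ≤ K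
  have hbound : ∀ j, F j ≤ K → j ≤ finrank ℚ K := by
    intro j hj
    haveI := (tower_findim hfin hdeg j).1
    have hmul := IntermediateField.finrank_bot_mul_relfinrank hj
    have hKpos : 0 < finrank ℚ K := finrank_pos
    have hrelpos : 0 < IntermediateField.relfinrank (F j) K := by
      rcases Nat.eq_zero_or_pos (IntermediateField.relfinrank (F j) K) with h0 | h0
      · rw [h0, mul_zero] at hmul; omega
      · exact h0
    have hle1 : finrank ℚ (F j) ≤ finrank ℚ K := by
      calc finrank ℚ (F j) = finrank ℚ (F j) * 1 := by ring
      _ ≤ finrank ℚ (F j) * IntermediateField.relfinrank (F j) K :=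
          Nat.mul_le_mul_left _ hrelpos
      _ = finrank ℚ K := hmul
    have h2j : 2 ^ j ≤ finrank ℚ (F j) := by
      rw [(tower_findim hfin hdeg j).2]
      calc (2:ℕ) ^ j = 2 ^ j * 1 := by ring
      _ ≤ 2 ^ j * finrank ℚ (F 0) := Nat.mul_le_mul_left _ hd0
    have := Nat.lt_two_pow_self (n := j)
    omega
  set n := Nat.findGreatest (fun j => F j ≤ K) (finrank ℚ K) with hn
  have hFnK : F n ≤ K :=
    Nat.findGreatest_spec (P := fun j => F j ≤ K) (Nat.zero_le _) hK0
  have hmax : ∀ j, n < j → ¬ F j ≤ K := by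
    intro j hj hcon
    exact Nat.findGreatest_is_greatest (P := fun j => F j ≤ K) hj (hbound j hcon) hcon
  obtain ⟨m, hKm⟩ := tower_le_of_le_iSup hle K hKsup hKfd
  have hnm : n ≤ m := by
    by_contra hc
    push_neg at hc
    exact hKne n (le_antisymm (hKm.trans (tower_mono hle (by omega))) hFnK)
  -- relative degree of K over F n is 2
  have hrelnK : IntermediateField.relfinrank (F n) K = 2 := by
    have hne1 : IntermediateField.relfinrank (F n) K ≠ 1 := by
      intro h1
      exact hKne n ((relfinrank_eq_one_iff_of_le hFnK).mp h1).symm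
    have hdvd : IntermediateField.relfinrank (F n) K ∣ 2 ^ (m - n) := by
      refine ⟨IntermediateField.relfinrank K (F m), ?_⟩
      rw [IntermediateField.relfinrank_mul_relfinrank hFnK hKm,
        tower_rel hfin hdeg hle hnm]
    obtain ⟨i, hi, hieq⟩ := (Nat.dvd_prime_pow Nat.prime_two).mp hdvd
    rcases Nat.lt_or_ge i 2 with hi2 | hi2
    · interval_cases i
      · rw [hieq] at hne1; simp at hne1
      · rw [hieq]; norm_num
    · exfalso
      have h4 : 4 ≤ IntermediateField.relfinrank (F n) K := by
        rw [hieq]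
        calc (4:ℕ) = 2 ^ 2 := by norm_num
        _ ≤ 2 ^ i := Nat.pow_le_pow_right (by norm_num) hi2
      obtain ⟨X, hX1, hX2⟩ := exists_middle_of_four_le hfin hdeg hle hFnK hKm h4
      have hXfd : FiniteDimensional ℚ X := findim_of_le_findim hX2.le hKfd
      have hXne : ∀ j, X ≠ F j := by
        intro j hXj
        have hFjK : F j ≤ K := hXj ▸ hX2.le
        have hjn : j ≤ n := by
          by_contra hc
          push_neg at hc
          exact hmax j hc hFjK
        have : X ≤ F n := hXj.le.trans (tower_mono hle hjn)
        exact absurd (this.trans_lt' hX1) (lt_irrefl _)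
      have hminX := hmin X ((tower_mono hle (Nat.zero_le n)).trans hX1.le)
        (hX2.le.trans hKsup) hXfd hXne
      have hlt := finrank_lt_of_lt hX2 hKfd
      omega
  -- minimal m' with K ≤ F m'
  have hm'ex : ∃ m', K ≤ F m' := ⟨m, hKm⟩
  set m' := Nat.find hm'ex with hm'
  have hKm' : K ≤ F m' := Nat.find_spec hm'ex
  have hm'min : ∀ j, j < m' → ¬ K ≤ F j := fun j hj => Nat.find_min hm'ex hj
  have hm'2 : n + 2 ≤ m' := by
    by_contra hc
    push_neg at hc
    have hKn1 : K ≤ F (n + 1) := hKm'.trans (tower_mono hle (by omega))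
    have hrel01 : IntermediateField.relfinrank (F n) (F (n + 1)) = 2 := by
      have := tower_rel hfin hdeg hle (show n ≤ n + 1 by omega); simpa using this
    rcases middle_of_relfinrank_two hFnK hKn1 hrel01 with h' | h'
    · exact hKne n h'
    · exact hKne (n + 1) h'
  -- the square root generator
  haveI : Algebra.IsAlgebraic ℚ Ω := AlgebraicClosure.isAlgebraic ℚ
  obtain ⟨γ, hγK, hγ2, hγgen⟩ := exists_sqrt_gen hFnK hrelnK
  set n₀ := m' - 2 with hn₀
  have hnn₀ : n ≤ n₀ := by omega
  have hm'eq : n₀ + 2 = m' := by omega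
  set K' := F n₀ ⊔ IntermediateField.adjoin ℚ {γ} with hK'
  have hKK' : K ≤ K' := by
    rw [← hγgen]
    exact sup_le_sup_right (tower_mono hle hnn₀) _
  have hK'le : K' ≤ F m' := by
    rw [hK']
    apply sup_le (tower_mono hle (by omega))
    rw [IntermediateField.adjoin_le_iff]
    intro z hz
    rw [Set.mem_singleton_iff] at hz
    subst hz
    exact hKm' hγK
  have hn₀K' : F n₀ ≤ K' := le_sup_left
  have hK'n1 : ¬ K' ≤ F (n₀ + 1) := by
    intro hcon
    have : K ≤ F (n₀ + 1) := hKK'.trans hcon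
    exact hm'min (n₀ + 1) (by omega) this
  have hreldvd : IntermediateField.relfinrank (F n₀) K' ∣ 2 :=
    relfinrank_sup_adjoin_sq_dvd_two (F n₀) (tower_mono hle hnn₀ hγ2)
  have hrelK' : IntermediateField.relfinrank (F n₀) K' = 2 := by
    rcases (Nat.prime_two.eq_one_or_self_of_dvd _ hreldvd) with h1 | h1
    · exfalso
      have := (relfinrank_eq_one_iff_of_le hn₀K').mp h1
      apply hK'n1
      rw [← this]
      exact hle n₀
    · exact h1
  have hK'ne : K' ≠ F (n₀ + 1) := by
    intro hcon
    exact hK'n1 (hcon.le)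
  have hK'le2 : K' ≤ F (n₀ + 2) := by rw [hm'eq]; exact hK'le
  obtain ⟨h2, hgal, hklein⟩ := klein_of_quadratic hfin hdeg hle hn₀K' hK'le2 hrelK' hK'ne
  exact ⟨n₀, h2, hgal, hklein⟩

end Main

open IntermediateField

theorem stmt_4 (F : ℕ → IntermediateField ℚ (AlgebraicClosure ℚ))
    (hfin : FiniteDimensional ℚ (F 0))
    (hle : ∀ n, F n ≤ F (n + 1))
    (hdeg : ∀ n, Module.finrank ℚ (F (n + 1)) = 2 * Module.finrank ℚ (F n)) :
    ¬ (∀ L : IntermediateField ℚ (AlgebraicClosure ℚ),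
        F 0 ≤ L → L ≤ ⨆ n, F n → FiniteDimensional ℚ L → ∃ n, L = F n) ↔
      ∃ n, ∃ h : F n ≤ F (n + 2),
        IsGalois (F n) (extendScalars h) ∧
        Nonempty ((extendScalars h ≃ₐ[F n] extendScalars h) ≃* (Multiplicative (ZMod 2 × ZMod 2))) := by
  constructor
  · intro hthin
    push_neg at hthin
    obtain ⟨L0, hL0a, hL0b, hL0c, hL0d⟩ := hthin
    exact forward_direction hfin hdeg hle L0 hL0a hL0b hL0c hL0d
  · rintro ⟨n, h, hgal, hk⟩ hthin
    obtain ⟨L, h1, h2, h3, h4⟩ := not_thin_of_klein hfin hdeg hle h hgal hk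
    obtain ⟨j, hj⟩ := hthin L h1 h2 h3
    exact h4 j hj
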